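/- Let X be a Banach space and T ∈ L(X) with c(T) > 0. Define φ_T : B_X → (−∞, ∞] by φ_T(x) = (1/‖x‖)·min{|x*(T(x/‖x‖))| : (x/‖x‖, x*) ∈ Π(X)} for x ≠ 0 and φ_T(0) = ∞. Then φ_T is bounded below (by c(T)) on B_X \ {0} and lower semicontinuous on B_X. -/

import Mathlib

noncomputable def crawford {𝕜 : Type*} [RCLike 𝕜] {E : Type*} [NormedAddCommGroup E]
    [NormedSpace 𝕜 E] (T : E →L[𝕜] E) : ℝ :=
  sInf {r : ℝ | ∃ (x : E) (f : E →L[𝕜] 𝕜), ‖x‖ = 1 ∧ ‖f‖ = 1 ∧ f x = 1 ∧ r = ‖f (T x)‖}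

def CrawfordAttains {𝕜 : Type*} [RCLike 𝕜] {E : Type*} [NormedAddCommGroup E]
    [NormedSpace 𝕜 E] (T : E →L[𝕜] E) : Prop :=
  ∃ (x : E) (f : E →L[𝕜] 𝕜), ‖x‖ = 1 ∧ ‖f‖ = 1 ∧ f x = 1 ∧ crawford T = ‖f (T x)‖

section Aux

variable {𝕜 : Type*} [RCLike 𝕜] {X : Type*} [NormedAddCommGroup X] [NormedSpace 𝕜 X]

lemma aux_norm_unit {z : X} (hz : z ≠ 0) : ‖(‖z‖⁻¹ : 𝕜) • z‖ = 1 := by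
  rw [norm_smul, norm_inv, RCLike.norm_ofReal, abs_of_nonneg (norm_nonneg z),
    inv_mul_cancel₀ (norm_ne_zero_iff.mpr hz)]

/-- The set of values `‖f (T u_z)‖` over norming functionals of `u_z`. -/
def auxS (T : X →L[𝕜] X) (z : X) : Set ℝ :=
  {r : ℝ | ∃ f : X →L[𝕜] 𝕜, ‖f‖ = 1 ∧ f ((‖z‖⁻¹ : 𝕜) • z) = 1 ∧ r = ‖f (T ((‖z‖⁻¹ : 𝕜) • z))‖}

lemma auxS_nonempty [CompleteSpace X] (T : X →L[𝕜] X) {z : X} (hz : z ≠ 0) :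
    (auxS T z).Nonempty := by
  have hu : ((‖z‖⁻¹ : 𝕜) • z) ≠ 0 := by
    intro h
    have := aux_norm_unit (𝕜 := 𝕜) hz
    rw [h, norm_zero] at this
    norm_num at this
  obtain ⟨g, hg1, hg2⟩ := exists_dual_vector 𝕜 ((‖z‖⁻¹ : 𝕜) • z) (norm_ne_zero_iff.mpr hu)
  refine ⟨‖g (T ((‖z‖⁻¹ : 𝕜) • z))‖, g, hg1, ?_, rfl⟩
  rw [hg2, aux_norm_unit hz, RCLike.ofReal_one]

lemma auxS_bddBelow (T : X →L[𝕜] X) (z : X) : BddBelow (auxS T z) := by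
  refine ⟨0, fun r hr => ?_⟩
  obtain ⟨f, _, _, hr⟩ := hr
  rw [hr]; exact norm_nonneg _

lemma crawford_le_auxS [CompleteSpace X] (T : X →L[𝕜] X) {z : X} (hz : z ≠ 0) :
    crawford T ≤ sInf (auxS T z) := by
  refine csInf_le_csInf ?_ (auxS_nonempty T hz) ?_
  · refine ⟨0, fun r hr => ?_⟩
    obtain ⟨x, f, _, _, _, hr⟩ := hr
    rw [hr]; exact norm_nonneg _
  · rintro r ⟨f, hf1, hf2, hr⟩
    exact ⟨(‖z‖⁻¹ : 𝕜) • z, f, aux_norm_unit hz, hf1, hf2, hr⟩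

end Aux

open ENNReal Classical in
theorem phi_bddBelow_and_lowerSemicontinuous
    {𝕜 : Type*} [RCLike 𝕜] {X : Type*} [NormedAddCommGroup X] [NormedSpace 𝕜 X]
    [CompleteSpace X] (T : X →L[𝕜] X) (hc : 0 < crawford T)
    (φ : X → ℝ≥0∞)
    (hφ : ∀ x : X, φ x = if x = 0 then ⊤ else
      ENNReal.ofReal (‖x‖⁻¹ * sInf {r : ℝ | ∃ f : X →L[𝕜] 𝕜, ‖f‖ = 1 ∧
        f ((‖x‖⁻¹ : 𝕜) • x) = 1 ∧ r = ‖f (T ((‖x‖⁻¹ : 𝕜) • x))‖})) :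
    (∀ x ∈ Metric.closedBall (0 : X) 1, x ≠ 0 → ENNReal.ofReal (crawford T) ≤ φ x) ∧
    LowerSemicontinuousOn φ (Metric.closedBall (0 : X) 1) := by
  have hφ' : ∀ z : X, z ≠ 0 → φ z = ENNReal.ofReal (‖z‖⁻¹ * sInf (auxS T z)) := by
    intro z hz
    rw [hφ z, if_neg hz]; rfl
  have hm : ∀ z : X, z ≠ 0 → crawford T ≤ sInf (auxS T z) := fun z hz =>
    crawford_le_auxS T hz
  -- the lower bound
  have hlb : ∀ z : X, z ≠ 0 → ‖z‖ ≤ 1 → ENNReal.ofReal (crawford T) ≤ φ z := by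
    intro z hz hz1
    rw [hφ' z hz]
    refine ENNReal.ofReal_le_ofReal ?_
    have h1 : (1 : ℝ) ≤ ‖z‖⁻¹ := by
      rw [le_inv_comm₀ one_pos (norm_pos_iff.mpr hz)]
      simpa using hz1
    calc crawford T ≤ sInf (auxS T z) := hm z hz
      _ = 1 * sInf (auxS T z) := (one_mul _).symm
      _ ≤ ‖z‖⁻¹ * sInf (auxS T z) :=
        mul_le_mul_of_nonneg_right h1 (le_trans hc.le (hm z hz))
  constructor
  · intro x hx hx0
    exact hlb x hx0 (by simpa [Metric.mem_closedBall, dist_zero_right] using hx)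
  -- lower semicontinuity
  intro x hx
  by_cases hx0 : x = 0
  · -- at 0, φ blows up
    subst hx0
    intro y hy
    have hyt : y ≠ ⊤ := by
      rw [hφ 0, if_pos rfl] at hy
      exact hy.ne
    set δ : ℝ := crawford T / (y.toReal + 1) with hδ
    have hy0 : (0 : ℝ) ≤ y.toReal := ENNReal.toReal_nonneg
    have hδpos : 0 < δ := div_pos hc (by linarith)
    have : ∀ᶠ z in nhds (0 : X), y < φ z := by
      rw [Metric.eventually_nhds_iff]
      refine ⟨δ, hδpos, fun {z} hzδ => ?_⟩
      by_cases hz : z = 0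
      · rw [hφ z, if_pos hz]
        exact lt_of_le_of_ne le_top hyt
      · rw [hφ' z hz]
        rw [ENNReal.lt_ofReal_iff_toReal_lt hyt]
        have hzpos : 0 < ‖z‖ := norm_pos_iff.mpr hz
        have hzlt : ‖z‖ < δ := by simpa [dist_zero_right] using hzδ
        have h2 : y.toReal + 1 < ‖z‖⁻¹ * crawford T := by
          rw [lt_inv_mul_iff₀ hzpos]
          calc ‖z‖ * (y.toReal + 1) < δ * (y.toReal + 1) := by
                exact mul_lt_mul_of_pos_right hzlt (by linarith)
            _ = crawford T := by
                rw [hδ]; exact div_mul_cancel₀ _ (ne_of_gt (by linarith))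
        have h3 : ‖z‖⁻¹ * crawford T ≤ ‖z‖⁻¹ * sInf (auxS T z) :=
          mul_le_mul_of_nonneg_left (hm z hz) (inv_nonneg.mpr hzpos.le)
        linarith
    exact Filter.Eventually.filter_mono nhdsWithin_le_nhds this
  · -- at x ≠ 0
    intro y hy
    by_contra hcon
    have hyt : y ≠ ⊤ := by
      rw [hφ' x hx0] at hy
      exact hy.ne_top
    set y' : ℝ := y.toReal with hy'
    have hy'0 : 0 ≤ y' := ENNReal.toReal_nonneg
    set s := Metric.closedBall (0 : X) 1 with hs
    set u : X → X := fun z => (‖z‖⁻¹ : 𝕜) • z with hu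
    -- the "bad" set
    set A : Set X := {z : X | φ z ≤ y} with hA
    have hfreq : ∃ᶠ z in nhdsWithin x s, z ∈ A := by
      simpa [A, not_lt] using hcon
    have hneBot : (nhdsWithin x s ⊓ Filter.principal A).NeBot :=
      Filter.frequently_iff_neBot.mp hfreq
    set 𝒰 : Ultrafilter X := Ultrafilter.of (nhdsWithin x s ⊓ Filter.principal A) with h𝒰
    have hUle : ↑𝒰 ≤ nhdsWithin x s ⊓ Filter.principal A := Ultrafilter.of_le _
    have hUx : Filter.Tendsto id (↑𝒰) (nhds x) :=
      le_trans hUle (le_trans inf_le_left nhdsWithin_le_nhds)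
    have hUA : A ∈ 𝒰 := hUle (Filter.mem_inf_of_right (Filter.mem_principal_self A))
    -- key properties on A
    have hAz : ∀ z ∈ A, z ≠ 0 ∧ sInf (auxS T z) ≤ ‖z‖ * y' := by
      intro z hz
      have hz0 : z ≠ 0 := by
        intro h
        rw [hA] at hz
        simp only [Set.mem_setOf_eq] at hz
        rw [hφ z, if_pos h] at hz
        exact hyt (top_le_iff.mp hz)
      refine ⟨hz0, ?_⟩
      have hzle : φ z ≤ y := hz
      rw [hφ' z hz0, ENNReal.ofReal_le_iff_le_toReal hyt] at hzle
      have hzpos : 0 < ‖z‖ := norm_pos_iff.mpr hz0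
      calc sInf (auxS T z) = ‖z‖ * (‖z‖⁻¹ * sInf (auxS T z)) := by
            field_simp
        _ ≤ ‖z‖ * y' := mul_le_mul_of_nonneg_left hzle hzpos.le
    -- near-minimizing functionals
    set P : X → Prop := fun z => ∃ f : X →L[𝕜] 𝕜, ‖f‖ = 1 ∧ f (u z) = 1 ∧
      ‖f (T (u z))‖ < sInf (auxS T z) + dist z x with hP
    set F : X → WeakDual 𝕜 X := fun z =>
      if h : P z then StrongDual.toWeakDual h.choose else 0 with hF
    have hPA : ∀ z ∈ A, P z := by
      intro z hz
      have hz0 := (hAz z hz).1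
      have hzx : z ≠ x := by
        intro h
        have := hz
        rw [hA, Set.mem_setOf_eq, h] at this
        exact absurd this (not_le.mpr hy)
      have hd : 0 < dist z x := dist_pos.mpr hzx
      obtain ⟨r, hrS, hrlt⟩ := exists_lt_of_csInf_lt (auxS_nonempty T hz0)
        (lt_add_of_pos_right (sInf (auxS T z)) hd)
      obtain ⟨f, hf1, hf2, hf3⟩ := hrS
      exact ⟨f, hf1, hf2, by rw [← hf3]; exact hrlt⟩
    have hFA : ∀ z ∈ A, ‖WeakDual.toStrongDual (F z)‖ = 1 ∧ (F z) (u z) = 1 ∧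
        ‖(F z) (T (u z))‖ < sInf (auxS T z) + dist z x := by
      intro z hz
      have hp := hPA z hz
      rw [hF]
      simp only [dif_pos hp]
      obtain ⟨hf1, hf2, hf3⟩ := hp.choose_spec
      exact ⟨hf1, hf2, hf3⟩
    -- compactness of the dual ball
    have hK := WeakDual.isCompact_closedBall (𝕜 := 𝕜) (E := X) 0 1
    obtain ⟨g, hgmem, hgle⟩ := hK.ultrafilter_le_nhds (𝒰.map F) (by
      rw [Ultrafilter.coe_map, Filter.le_principal_iff, Filter.mem_map]
      refine Filter.mem_of_superset hUA fun z hz => ?_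
      have h1 := (hFA z hz).1
      simp only [Set.mem_preimage, Metric.mem_closedBall, dist_zero_right]
      rw [h1])
    have hFg : Filter.Tendsto F ↑𝒰 (nhds g) := by rwa [Ultrafilter.coe_map] at hgle
    -- continuity of z ↦ u z at x
    have hucont : Filter.Tendsto u ↑𝒰 (nhds (u x)) := by
      have h1 : ContinuousAt (fun z : X => ((‖z‖ : 𝕜))⁻¹) x := by
        apply ContinuousAt.inv₀
        · exact RCLike.continuous_ofReal.continuousAt.comp continuous_norm.continuousAt
        · simpa using norm_ne_zero_iff.mpr hx0
      have h2 : ContinuousAt u x := h1.smul continuousAt_id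
      exact h2.tendsto.comp hUx
    have huzero : Filter.Tendsto (fun z => ‖u z - u x‖) ↑𝒰 (nhds 0) := by
      have h := (hucont.sub_const (u x)).norm
      simpa using h
    -- g (u x) = 1
    have hgu : g (u x) = 1 := by
      have h1 : Filter.Tendsto (fun z => (F z) (u x)) ↑𝒰 (nhds (g (u x))) :=
        ((WeakDual.eval_continuous (u x)).continuousAt.tendsto).comp hFg
      have h2 : Filter.Tendsto (fun z => (F z) (u x)) ↑𝒰 (nhds 1) := by
        rw [tendsto_iff_norm_sub_tendsto_zero]
        refine squeeze_zero_norm' ?_ huzero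
        filter_upwards [hUA] with z hz
        obtain ⟨hf1, hf2, _⟩ := hFA z hz
        have : (F z) (u x) - 1 = (F z) (u x - u z) := by
          rw [map_sub, hf2]
        rw [norm_norm, this]
        calc ‖(F z) (u x - u z)‖ ≤ ‖WeakDual.toStrongDual (F z)‖ * ‖u x - u z‖ :=
              (WeakDual.toStrongDual (F z)).le_opNorm _
          _ = ‖u z - u x‖ := by rw [hf1, one_mul, norm_sub_rev]
      exact tendsto_nhds_unique h1 h2
    -- ‖g (T (u x))‖ ≤ ‖x‖ * y'
    have hgT : ‖g (T (u x))‖ ≤ ‖x‖ * y' := by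
      have h1 : Filter.Tendsto (fun z => ‖(F z) (T (u x))‖) ↑𝒰 (nhds ‖g (T (u x))‖) :=
        (((WeakDual.eval_continuous (T (u x))).continuousAt.tendsto).comp hFg).norm
      have h2 : Filter.Tendsto (fun z => ‖z‖ * y' + dist z x + ‖T‖ * ‖u z - u x‖) ↑𝒰
          (nhds (‖x‖ * y' + 0 + ‖T‖ * 0)) := by
        refine Filter.Tendsto.add (Filter.Tendsto.add ?_ ?_) ?_
        · exact ((continuous_norm.continuousAt.tendsto).comp hUx).mul_const y'
        · have h3 : Filter.Tendsto (fun z : X => dist z x) (nhds x) (nhds (dist x x)) :=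
            (continuous_id.dist continuous_const).continuousAt.tendsto
          rw [dist_self] at h3
          exact h3.comp hUx
        · exact huzero.const_mul ‖T‖
      rw [mul_zero, add_zero, add_zero] at h2
      refine le_of_tendsto_of_tendsto h1 h2 ?_
      filter_upwards [hUA] with z hz
      obtain ⟨hf1, hf2, hf3⟩ := hFA z hz
      obtain ⟨hz0, hzy⟩ := hAz z hz
      calc ‖(F z) (T (u x))‖ ≤ ‖(F z) (T (u z))‖ + ‖(F z) (T (u x)) - (F z) (T (u z))‖ := by
            have h4 := norm_add_le ((F z) (T (u z))) ((F z) (T (u x)) - (F z) (T (u z)))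
            simpa using h4
        _ ≤ (sInf (auxS T z) + dist z x) + ‖T‖ * ‖u z - u x‖ := by
            refine add_le_add hf3.le ?_
            rw [← map_sub]
            calc ‖(F z) (T (u x) - T (u z))‖
                ≤ ‖WeakDual.toStrongDual (F z)‖ * ‖T (u x) - T (u z)‖ :=
                  (WeakDual.toStrongDual (F z)).le_opNorm _
              _ = ‖T (u x) - T (u z)‖ := by rw [hf1, one_mul]
              _ = ‖T (u x - u z)‖ := by rw [map_sub]
              _ ≤ ‖T‖ * ‖u x - u z‖ := T.le_opNorm _
              _ = ‖T‖ * ‖u z - u x‖ := by rw [norm_sub_rev]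
        _ ≤ ‖z‖ * y' + dist z x + ‖T‖ * ‖u z - u x‖ := by
            linarith
    -- conclude: sInf (auxS T x) ≤ ‖x‖ * y'
    have hgnorm : ‖WeakDual.toStrongDual g‖ = 1 := by
      have hle : ‖WeakDual.toStrongDual g‖ ≤ 1 := by
        simpa [Metric.mem_closedBall, dist_zero_right] using hgmem
      have hge : 1 ≤ ‖WeakDual.toStrongDual g‖ := by
        have h1 : ‖g (u x)‖ = 1 := by rw [hgu, norm_one]
        have h2 : ‖g (u x)‖ ≤ ‖WeakDual.toStrongDual g‖ * ‖u x‖ :=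
          (WeakDual.toStrongDual g).le_opNorm _
        rw [aux_norm_unit hx0, mul_one] at h2
        linarith [h1, h2]
      linarith
    have hmemSx : ‖g (T (u x))‖ ∈ auxS T x :=
      ⟨WeakDual.toStrongDual g, hgnorm, hgu, rfl⟩
    have hsInfle : sInf (auxS T x) ≤ ‖x‖ * y' :=
      le_trans (csInf_le (auxS_bddBelow T x) hmemSx) hgT
    have hxpos : 0 < ‖x‖ := norm_pos_iff.mpr hx0
    have hfinal : φ x ≤ y := by
      rw [hφ' x hx0]
      have : ‖x‖⁻¹ * sInf (auxS T x) ≤ y' := by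
        calc ‖x‖⁻¹ * sInf (auxS T x) ≤ ‖x‖⁻¹ * (‖x‖ * y') :=
              mul_le_mul_of_nonneg_left hsInfle (inv_nonneg.mpr hxpos.le)
          _ = y' := by field_simp
      calc ENNReal.ofReal (‖x‖⁻¹ * sInf (auxS T x)) ≤ ENNReal.ofReal y' :=
            ENNReal.ofReal_le_ofReal this
        _ = y := ENNReal.ofReal_toReal hyt
    exact absurd hfinal (not_le.mpr hy)
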